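/- Suppose the bases {a_i}_{i=1}^d and {b_i}_{i=1}^d are mutually unbiased, i.e., |⟨a_i, b_j⟩|² = 1/d for all i, j. Then for every orthonormal basis {a'_i}_{i=1}^d of H, the trade-off ε(𝒜,𝒜') + η(𝒜',ℬ) ≥ 1 − 1/d holds; moreover η(𝒜,ℬ) = 1 − 1/d, so equality is attained when a'_i = a_i for all i. -/

import Mathlib

open scoped ComplexInnerProductSpace
set_option linter.unusedSectionVars false
set_option maxHeartbeats 1000000

noncomputable section

variable {H : Type*} [NormedAddCommGroup H] [InnerProductSpace ℂ H] [FiniteDimensional ℂ H]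
variable {ι ι' : Type*} [Fintype ι] [Fintype ι']

/-- The rank-one projector `|v⟩⟨v|`. -/
def ketbra (v : H) : H →ₗ[ℂ] H where
  toFun x := ⟪v, x⟫ • v
  map_add' x y := by simp [inner_add_right, add_smul]
  map_smul' c x := by simp [inner_smul_right, mul_smul]

/-- A density operator: self-adjoint, positive semidefinite, trace one. -/
def IsDensity (ρ : H →ₗ[ℂ] H) : Prop :=
  LinearMap.IsSymmetric ρ ∧ (∀ x : H, 0 ≤ (⟪x, ρ x⟫).re) ∧
    LinearMap.trace ℂ H ρ = 1

/-- The state-dependent error `ε_ρ(𝒜,𝒜')`. -/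
def sdError (a a' : ι → H) (ρ : H →ₗ[ℂ] H) : ℝ :=
  ⨆ i : ι, ‖LinearMap.trace ℂ H (ρ ∘ₗ (ketbra (a i) - ketbra (a' i)))‖

/-- The state-independent error `ε(𝒜,𝒜')`. -/
def siError (a a' : ι → H) : ℝ :=
  ⨆ ρ : {ρ : H →ₗ[ℂ] H // IsDensity ρ}, sdError a a' ρ.1

/-- The operator `|b_i⟩⟨b_i| − Σ_j |⟨a'_j, b_i⟩|² |a'_j⟩⟨a'_j|`. -/
def distOp (a' : ι' → H) (b : ι → H) (i : ι) : H →ₗ[ℂ] H :=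
  ketbra (b i) - ∑ j : ι', (‖⟪a' j, b i⟫‖ ^ 2 : ℂ) • ketbra (a' j)

/-- The state-dependent disturbance `η_ρ(𝒜',ℬ)`. -/
def sdDist (a' : ι' → H) (b : ι → H) (ρ : H →ₗ[ℂ] H) : ℝ :=
  ⨆ i : ι, ‖LinearMap.trace ℂ H (ρ ∘ₗ distOp a' b i)‖

/-- The state-independent disturbance `η(𝒜',ℬ)`. -/
def siDist (a' : ι' → H) (b : ι → H) : ℝ :=
  ⨆ ρ : {ρ : H →ₗ[ℂ] H // IsDensity ρ}, sdDist a' b ρ.1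

/-- The state-independent overall error `Δ(𝒜,𝒜',ℬ)`. -/
def siOverall (a a' b : ι → H) : ℝ :=
  ⨆ ρ : {ρ : H →ₗ[ℂ] H // IsDensity ρ}, (sdError a a' ρ.1 + sdDist a' b ρ.1)

/-! ### Auxiliary lemmas -/

lemma ketbra_apply (v x : H) : ketbra v x = ⟪v, x⟫ • v := rfl

lemma norm_coeC (r : ℝ) : ‖(r : ℂ)‖ = |r| := by
  rw [Complex.norm_real, Real.norm_eq_abs]

lemma inner_mul_inner_conj (x v : H) : ⟪x, v⟫ * ⟪v, x⟫ = ((‖⟪v, x⟫‖ ^ 2 : ℝ) : ℂ) := by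
  rw [← inner_conj_symm x v, mul_comm, Complex.mul_conj, Complex.normSq_eq_norm_sq]

lemma trace_onb (u : OrthonormalBasis ι ℂ H) (T : H →ₗ[ℂ] H) :
    LinearMap.trace ℂ H T = ∑ i, ⟪u i, T (u i)⟫ := by
  classical
  rw [LinearMap.trace_eq_matrix_trace ℂ u.toBasis]
  simp [Matrix.trace, Matrix.diag, LinearMap.toMatrix_apply, OrthonormalBasis.coe_toBasis,
    OrthonormalBasis.coe_toBasis_repr_apply, OrthonormalBasis.repr_apply_apply]

lemma trace_comp_ketbra (u : OrthonormalBasis ι ℂ H) (ρ : H →ₗ[ℂ] H) (v : H) :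
    LinearMap.trace ℂ H (ρ ∘ₗ ketbra v) = ⟪v, ρ v⟫ := by
  rw [trace_onb u]
  simp only [LinearMap.comp_apply, ketbra_apply, map_smul, inner_smul_right]
  exact u.sum_inner_mul_inner v (ρ v)

lemma parseval (u : OrthonormalBasis ι ℂ H) (x : H) (hx : ‖x‖ = 1) :
    ∑ j, ‖⟪u j, x⟫‖ ^ 2 = 1 := by
  have h := u.sum_inner_mul_inner x x
  simp only [inner_mul_inner_conj] at h
  rw [inner_self_eq_norm_sq_to_K, hx] at h
  have h2 := congrArg Complex.re h
  simpa [Complex.re_sum, ← Complex.ofReal_pow] using h2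

lemma inner_ketbra_self (v x : H) : ⟪x, ketbra v x⟫ = ((‖⟪v, x⟫‖ ^ 2 : ℝ) : ℂ) := by
  rw [ketbra_apply, inner_smul_right, mul_comm, inner_mul_inner_conj]

lemma isDensity_ketbra (u : OrthonormalBasis ι ℂ H) (v : H) (hv : ‖v‖ = 1) :
    IsDensity (ketbra v) := by
  refine ⟨fun x y => ?_, fun x => ?_, ?_⟩
  · simp only [ketbra_apply, inner_smul_left, inner_smul_right, inner_conj_symm]
    ring
  · rw [inner_ketbra_self]
    simp only [Complex.ofReal_re]
    positivity
  · rw [trace_onb u]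
    simp_rw [inner_ketbra_self]
    rw [← Complex.ofReal_sum]
    have h : ∑ i, ‖⟪v, u i⟫‖ ^ 2 = ∑ i, ‖⟪u i, v⟫‖ ^ 2 :=
      Finset.sum_congr rfl fun i _ => by rw [norm_inner_symm]
    rw [h, parseval u v hv, Complex.ofReal_one]

lemma density_inner_re {ρ : H →ₗ[ℂ] H} (hρ : IsDensity ρ) (v : H) :
    ⟪v, ρ v⟫ = (((⟪v, ρ v⟫).re : ℝ) : ℂ) := by
  have h1 : (starRingEnd ℂ) ⟪v, ρ v⟫ = ⟪v, ρ v⟫ :=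
    (inner_conj_symm (ρ v) v).trans (hρ.1 v v)
  exact (Complex.conj_eq_iff_re.mp h1).symm

lemma density_diag_sum {ρ : H →ₗ[ℂ] H} (hρ : IsDensity ρ) (u : OrthonormalBasis ι ℂ H) :
    ∑ i, (⟪u i, ρ (u i)⟫).re = 1 := by
  have h := hρ.2.2
  rw [trace_onb u] at h
  have h2 := congrArg Complex.re h
  simpa [Complex.re_sum, ← Complex.ofReal_pow] using h2

lemma density_diag_le_one [Nonempty ι] {ρ : H →ₗ[ℂ] H} (hρ : IsDensity ρ)
    (u : OrthonormalBasis ι ℂ H) (k : ι) : (⟪u k, ρ (u k)⟫).re ≤ 1 := by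
  rw [← density_diag_sum hρ u]
  exact Finset.single_le_sum (fun i _ => hρ.2.1 (u i)) (Finset.mem_univ k)

lemma trace_comp_sub_ketbra (u : OrthonormalBasis ι ℂ H) (ρ : H →ₗ[ℂ] H) (x y : H) :
    LinearMap.trace ℂ H (ρ ∘ₗ (ketbra x - ketbra y)) = ⟪x, ρ x⟫ - ⟪y, ρ y⟫ := by
  have h : ρ ∘ₗ (ketbra x - ketbra y) = ρ ∘ₗ ketbra x - ρ ∘ₗ ketbra y := by
    ext z
    simp [LinearMap.sub_apply, map_sub]
  rw [h, map_sub, trace_comp_ketbra u, trace_comp_ketbra u]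

lemma trace_comp_distOp {ι'' : Type*} [Fintype ι''] (u : OrthonormalBasis ι'' ℂ H)
    (ρ : H →ₗ[ℂ] H) (a' : ι' → H) (b : ι → H) (i : ι) :
    LinearMap.trace ℂ H (ρ ∘ₗ distOp a' b i)
      = ⟪b i, ρ (b i)⟫ - ∑ j, (‖⟪a' j, b i⟫‖ ^ 2 : ℂ) * ⟪a' j, ρ (a' j)⟫ := by
  have h : ρ ∘ₗ distOp a' b i
      = ρ ∘ₗ ketbra (b i) - ∑ j, (‖⟪a' j, b i⟫‖ ^ 2 : ℂ) • (ρ ∘ₗ ketbra (a' j)) := by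
    ext z
    simp [distOp, LinearMap.sub_apply, LinearMap.sum_apply, map_sub, map_sum, map_smul]
  rw [h, map_sub, map_sum]
  simp_rw [map_smul, smul_eq_mul, trace_comp_ketbra u]

theorem mub_tradeoff {d : ℕ} (hd : 2 ≤ d) (a b : OrthonormalBasis (Fin d) ℂ H)
    (hmub : ∀ i j : Fin d, ‖⟪a i, b j⟫‖ ^ 2 = 1 / (d : ℝ)) :
    (∀ a' : OrthonormalBasis (Fin d) ℂ H,
        1 - 1 / (d : ℝ) ≤ siError (⇑a) (⇑a') + siDist (⇑a') (⇑b)) ∧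
    siDist (⇑a) (⇑b) = 1 - 1 / (d : ℝ) ∧
    siError (⇑a) (⇑a) + siDist (⇑a) (⇑b) = 1 - 1 / (d : ℝ) := by
  classical
  have hd0 : 0 < d := by omega
  haveI : Nonempty (Fin d) := ⟨⟨0, hd0⟩⟩
  have hdR : (0 : ℝ) < d := by exact_mod_cast hd0
  have hd2 : (2 : ℝ) ≤ d := by exact_mod_cast hd
  have hinv_half : 1 / (d : ℝ) ≤ 1 / 2 := by
    apply one_div_le_one_div_of_le <;> linarith
  have hinv_pos : 0 < 1 / (d : ℝ) := by positivity
  set k0 : Fin d := ⟨0, hd0⟩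
  set ρ₀ : H →ₗ[ℂ] H := ketbra (b k0) with hρ₀def
  have hρ₀ : IsDensity ρ₀ := isDensity_ketbra a (b k0) (b.orthonormal.1 k0)
  haveI : Nonempty {ρ : H →ₗ[ℂ] H // IsDensity ρ} := ⟨⟨ρ₀, hρ₀⟩⟩
  -- the real form of the error trace
  have herr_re : ∀ (ρ : H →ₗ[ℂ] H), IsDensity ρ → ∀ x y : H,
      LinearMap.trace ℂ H (ρ ∘ₗ (ketbra x - ketbra y))
        = (((⟪x, ρ x⟫).re - (⟪y, ρ y⟫).re : ℝ) : ℂ) := by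
    intro ρ hρ x y
    rw [trace_comp_sub_ketbra a, density_inner_re hρ x, density_inner_re hρ y]
    push_cast [Complex.ofReal_re]
    ring
  -- the real form of the disturbance trace
  have hdist_re : ∀ (ρ : H →ₗ[ℂ] H), IsDensity ρ → ∀ (a' : Fin d → H) (i : Fin d),
      LinearMap.trace ℂ H (ρ ∘ₗ distOp a' (⇑b) i)
        = (((⟪b i, ρ (b i)⟫).re
            - ∑ j, ‖⟪a' j, b i⟫‖ ^ 2 * (⟪a' j, ρ (a' j)⟫).re : ℝ) : ℂ) := by
    intro ρ hρ a' i
    rw [trace_comp_distOp a, density_inner_re hρ (b i)]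
    have h : ∀ j : Fin d, (‖⟪a' j, b i⟫‖ ^ 2 : ℂ) * ⟪a' j, ρ (a' j)⟫
        = ((‖⟪a' j, b i⟫‖ ^ 2 * (⟪a' j, ρ (a' j)⟫).re : ℝ) : ℂ) := by
      intro j
      rw [density_inner_re hρ (a' j)]
      push_cast [Complex.ofReal_re]
      ring
    simp_rw [h]
    push_cast [Complex.ofReal_re]
    ring
  -- bound 0 ≤ re ≤ 1 for diag entries
  have hub : ∀ (ρ : H →ₗ[ℂ] H), IsDensity ρ → ∀ (u : OrthonormalBasis (Fin d) ℂ H) (k : Fin d),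
      0 ≤ (⟪u k, ρ (u k)⟫).re ∧ (⟪u k, ρ (u k)⟫).re ≤ 1 :=
    fun ρ hρ u k => ⟨hρ.2.1 (u k), density_diag_le_one hρ u k⟩
  -- state-dependent error is bounded by 1
  have herrb : ∀ (a' : OrthonormalBasis (Fin d) ℂ H) (ρ : H →ₗ[ℂ] H), IsDensity ρ →
      sdError (⇑a) (⇑a') ρ ≤ 1 := by
    intro a' ρ hρ
    refine ciSup_le fun i => ?_
    rw [herr_re ρ hρ, norm_coeC, abs_le]
    obtain ⟨h1, h2⟩ := hub ρ hρ a i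
    obtain ⟨h3, h4⟩ := hub ρ hρ a' i
    constructor <;> linarith
  -- state-dependent disturbance is bounded by 1
  have hdistb : ∀ (a' : OrthonormalBasis (Fin d) ℂ H) (ρ : H →ₗ[ℂ] H), IsDensity ρ →
      sdDist (⇑a') (⇑b) ρ ≤ 1 := by
    intro a' ρ hρ
    refine ciSup_le fun i => ?_
    rw [hdist_re ρ hρ, norm_coeC, abs_le]
    obtain ⟨h1, h2⟩ := hub ρ hρ b i
    have hs0 : 0 ≤ ∑ j, ‖⟪a' j, b i⟫‖ ^ 2 * (⟪a' j, ρ (a' j)⟫).re :=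
      Finset.sum_nonneg fun j _ => mul_nonneg (by positivity) (hρ.2.1 (a' j))
    have hs1 : ∑ j, ‖⟪a' j, b i⟫‖ ^ 2 * (⟪a' j, ρ (a' j)⟫).re ≤ 1 := by
      calc ∑ j, ‖⟪a' j, b i⟫‖ ^ 2 * (⟪a' j, ρ (a' j)⟫).re
          ≤ ∑ j, ‖⟪a' j, b i⟫‖ ^ 2 := Finset.sum_le_sum fun j _ => by
            have := (hub ρ hρ a' j).2
            nlinarith [sq_nonneg ‖⟪a' j, b i⟫‖]
        _ = 1 := parseval a' (b i) (b.orthonormal.1 i)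
    constructor <;> linarith
  -- specialized trace for distOp a b
  have hdist_a : ∀ (ρ : H →ₗ[ℂ] H), IsDensity ρ → ∀ i : Fin d,
      LinearMap.trace ℂ H (ρ ∘ₗ distOp (⇑a) (⇑b) i)
        = (((⟪b i, ρ (b i)⟫).re - 1 / (d : ℝ) : ℝ) : ℂ) := by
    intro ρ hρ i
    rw [hdist_re ρ hρ (⇑a) i]
    congr 1
    have h : ∑ j, ‖⟪a j, b i⟫‖ ^ 2 * (⟪a j, ρ (a j)⟫).re
        = ∑ j, (1 / (d : ℝ)) * (⟪a j, ρ (a j)⟫).re :=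
      Finset.sum_congr rfl fun j _ => by rw [hmub j i]
    rw [h, ← Finset.mul_sum, density_diag_sum hρ a, mul_one]
  -- PART 2 : siDist a b = 1 - 1/d
  have hDab : siDist (⇑a) (⇑b) = 1 - 1 / (d : ℝ) := by
    have hle : ∀ (ρ : H →ₗ[ℂ] H), IsDensity ρ → sdDist (⇑a) (⇑b) ρ ≤ 1 - 1 / (d : ℝ) := by
      intro ρ hρ
      refine ciSup_le fun i => ?_
      rw [hdist_a ρ hρ i, norm_coeC, abs_le]
      obtain ⟨h1, h2⟩ := hub ρ hρ b i
      constructor <;> linarith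
    refine le_antisymm (ciSup_le fun ρs => hle ρs.1 ρs.2) ?_
    have hB : BddAbove (Set.range fun ρs : {ρ : H →ₗ[ℂ] H // IsDensity ρ} =>
        sdDist (⇑a) (⇑b) ρs.1) := by
      refine ⟨1 - 1 / (d : ℝ), ?_⟩
      rintro x ⟨ρs, rfl⟩
      exact hle ρs.1 ρs.2
    refine le_ciSup_of_le hB ⟨ρ₀, hρ₀⟩ ?_
    refine le_ciSup_of_le (Finite.bddAbove_range _) k0 ?_
    have hp : (⟪b k0, ρ₀ (b k0)⟫).re = 1 := by
      rw [hρ₀def]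
      rw [show (⟪b k0, ketbra (b k0) (b k0)⟫ : ℂ)
          = ((‖⟪b k0, b k0⟫‖ ^ 2 : ℝ) : ℂ) from inner_ketbra_self _ _]
      rw [inner_self_eq_norm_sq_to_K]
      simp [b.orthonormal.1 k0]
    rw [hdist_a ρ₀ hρ₀ k0, hp, norm_coeC]
    rw [abs_of_nonneg (by linarith)]
  refine ⟨?_, hDab, ?_⟩
  · -- PART 1
    intro a'
    set c : Fin d → ℝ := fun j => ‖⟪a' j, b k0⟫‖ ^ 2 with hc
    obtain ⟨j0, -, hj0⟩ := Finset.exists_max_image Finset.univ c Finset.univ_nonempty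
    set m : ℝ := c j0 with hm
    have hcs : ∑ j, c j = 1 := parseval a' (b k0) (b.orthonormal.1 k0)
    have hc0 : ∀ j, 0 ≤ c j := fun j => by positivity
    -- error at ρ₀
    have e1 : m - 1 / (d : ℝ) ≤ sdError (⇑a) (⇑a') ρ₀ := by
      refine le_ciSup_of_le (Finite.bddAbove_range _) j0 ?_
      have h1 : (⟪a j0, ρ₀ (a j0)⟫).re = 1 / (d : ℝ) := by
        rw [hρ₀def, inner_ketbra_self, Complex.ofReal_re, norm_inner_symm, hmub j0 k0]
      have h2 : (⟪a' j0, ρ₀ (a' j0)⟫).re = m := by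
        rw [hρ₀def, inner_ketbra_self, Complex.ofReal_re, norm_inner_symm]
      rw [herr_re ρ₀ hρ₀, h1, h2, norm_coeC, abs_sub_comm]
      exact le_abs_self _
    -- disturbance at ρ₀
    have e2 : 1 - m ≤ sdDist (⇑a') (⇑b) ρ₀ := by
      refine le_ciSup_of_le (Finite.bddAbove_range _) k0 ?_
      have hp : (⟪b k0, ρ₀ (b k0)⟫).re = 1 := by
        rw [hρ₀def, inner_ketbra_self, Complex.ofReal_re, inner_self_eq_norm_sq_to_K]
        simp [b.orthonormal.1 k0]
      have hq : ∀ j, (⟪a' j, ρ₀ (a' j)⟫).re = c j := fun j => by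
        rw [hρ₀def, inner_ketbra_self, Complex.ofReal_re, norm_inner_symm]
      rw [hdist_re ρ₀ hρ₀ (⇑a') k0, norm_coeC, hp]
      simp_rw [hq]
      have hsum_le : ∑ j, c j * c j ≤ m := by
        calc ∑ j, c j * c j ≤ ∑ j, m * c j :=
              Finset.sum_le_sum fun j _ =>
                mul_le_mul_of_nonneg_right (hj0 j (Finset.mem_univ j)) (hc0 j)
          _ = m := by rw [← Finset.mul_sum, hcs, mul_one]
      calc 1 - m ≤ 1 - ∑ j, c j * c j := by linarith
        _ ≤ |1 - ∑ j, c j * c j| := le_abs_self _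
    -- lift to state-independent quantities
    have hBE : BddAbove (Set.range fun ρs : {ρ : H →ₗ[ℂ] H // IsDensity ρ} =>
        sdError (⇑a) (⇑a') ρs.1) :=
      ⟨1, by rintro x ⟨ρs, rfl⟩; exact herrb a' ρs.1 ρs.2⟩
    have hBD : BddAbove (Set.range fun ρs : {ρ : H →ₗ[ℂ] H // IsDensity ρ} =>
        sdDist (⇑a') (⇑b) ρs.1) :=
      ⟨1, by rintro x ⟨ρs, rfl⟩; exact hdistb a' ρs.1 ρs.2⟩
    have hE : sdError (⇑a) (⇑a') ρ₀ ≤ siError (⇑a) (⇑a') :=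
      le_ciSup hBE ⟨ρ₀, hρ₀⟩
    have hD : sdDist (⇑a') (⇑b) ρ₀ ≤ siDist (⇑a') (⇑b) :=
      le_ciSup hBD ⟨ρ₀, hρ₀⟩
    linarith
  · -- PART 3
    have hE0 : siError (⇑a) (⇑a) = 0 := by
      have h1 : ∀ ρs : {ρ : H →ₗ[ℂ] H // IsDensity ρ}, sdError (⇑a) (⇑a) ρs.1 = 0 := by
        intro ρs
        have h2 : ∀ i : Fin d,
            ‖LinearMap.trace ℂ H (ρs.1 ∘ₗ (ketbra (a i) - ketbra (a i)))‖ = 0 := by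
          intro i
          rw [sub_self]
          simp
        simp only [sdError]
        simp_rw [h2]
        exact ciSup_const
      simp only [siError]
      simp_rw [h1]
      exact ciSup_const
    rw [hE0, hDab, zero_add]
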